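/- Let K be a field of characteristic zero and A a K-algebra that is algebraic over K (every element of A satisfies a nonzero polynomial over K). If δ is a locally nilpotent K-derivation or a locally nilpotent K-E-derivation of A, then the only idempotent of A lying in both the kernel of δ and the image of δ is 0. -/

import Mathlib

open Polynomial

section PolyLemmas
variable {K : Type*} [Field K] [CharZero K]

private lemma deriv_coeff_top (p : K[X]) (d : ℕ) (h : p.natDegree = d + 1) :
    (derivative p).coeff d = (d+1 : K) * p.leadingCoeff ∧ (derivative p).natDegree = d := by
  have hp0 : p ≠ 0 := fun h0 => by simp [h0] at h
  have hc : (derivative p).coeff d = (d+1 : K) * p.leadingCoeff := by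
    rw [coeff_derivative, leadingCoeff, h]; ring
  refine ⟨hc, le_antisymm ?_ ?_⟩
  · have := natDegree_derivative_lt (p := p) (by omega)
    omega
  · apply le_natDegree_of_ne_zero
    rw [hc]
    exact mul_ne_zero (Nat.cast_add_one_ne_zero d) (leadingCoeff_ne_zero.2 hp0)

private noncomputable def Dd : K[X] → K[X] := fun q => q - q.comp (X - C 1)

private lemma Dd_deriv_comm (p : K[X]) :
    derivative (Dd p) = Dd (derivative p) := by
  simp [Dd, derivative_comp]

private lemma Dd_of_deriv_C (q : K[X]) (k : K)
    (h : derivative q = C k) : Dd q = C k := by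
  have h0 : derivative (q - C k * X) = 0 := by
    rw [derivative_sub, h]; simp
  have h1 := eq_C_of_derivative_eq_zero h0
  have hq : q = C k * X + C ((q - C k * X).coeff 0) := by
    rw [← h1]; ring
  rw [hq]
  unfold Dd
  simp only [add_comp, mul_comp, C_comp, X_comp, sub_comp]
  ring_nf
  simp

private lemma Dd_iter :
    ∀ (d : ℕ) (p : K[X]), p.natDegree = d →
      Dd^[d] p = C ((Nat.factorial d : K) * p.leadingCoeff) := by
  intro d
  induction d with
  | zero =>
    intro p hp
    simp only [Function.iterate_zero, id_eq, Nat.factorial_zero, Nat.cast_one, one_mul]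
    conv_lhs => rw [p.eq_C_of_natDegree_eq_zero hp]
    rw [leadingCoeff, hp]
  | succ d ih =>
    intro p hp
    obtain ⟨hc, hd⟩ := deriv_coeff_top p d hp
    have hlc : (derivative p).leadingCoeff = (d+1 : K) * p.leadingCoeff := by
      rw [leadingCoeff, hd, hc]
    have hcomm : ∀ n (q : K[X]), derivative (Dd^[n] q) = Dd^[n] (derivative q) := by
      intro n
      induction n with
      | zero => simp
      | succ n ih2 =>
        intro q
        rw [Function.iterate_succ_apply, Function.iterate_succ_apply, ← Dd_deriv_comm, ih2]
    have key : derivative (Dd^[d] p) = C ((Nat.factorial (d+1) : K) * p.leadingCoeff) := by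
      rw [hcomm, ih _ hd, hlc]
      congr 1
      push_cast [Nat.factorial_succ]
      ring
    rw [Function.iterate_succ_apply', Dd_of_deriv_C _ _ key]

private lemma deriv_iter :
    ∀ (d : ℕ) (p : K[X]), p.natDegree = d →
      (fun q : K[X] => derivative q)^[d] p = C ((Nat.factorial d : K) * p.leadingCoeff) := by
  intro d
  induction d with
  | zero =>
    intro p hp
    simp only [Function.iterate_zero, id_eq, Nat.factorial_zero, Nat.cast_one, one_mul]
    conv_lhs => rw [p.eq_C_of_natDegree_eq_zero hp]
    rw [leadingCoeff, hp]
  | succ d ih =>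
    intro p hp
    obtain ⟨hc, hd⟩ := deriv_coeff_top p d hp
    have hlc : (derivative p).leadingCoeff = (d+1 : K) * p.leadingCoeff := by
      rw [leadingCoeff, hd, hc]
    rw [Function.iterate_succ_apply]
    rw [ih _ hd, hlc]
    congr 1
    push_cast [Nat.factorial_succ]
    ring
end PolyLemmas

section MainAux
variable {K : Type*} [Field K] [CharZero K]
variable {A : Type*} [NonUnitalRing A] [Module K A] [SMulCommClass K A A] [IsScalarTower K A A]

/-- The common endgame: if `D` matches a degree-lowering operator `Δ` through
`p ↦ ↑e * aeval ↑b p` in the unitization, and `b` is algebraic, then `e = 0`. -/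
private lemma main_aux
    (e b : A)
    (hfd : FiniteDimensional K
      (Submodule.span K (Set.range fun n : ℕ => (fun x : A => x * b)^[n] b)))
    (heb : e * b = b)
    (D : Unitization K A → Unitization K A) (hD0 : D 0 = 0)
    (Δ : K[X] → K[X])
    (hDθ : ∀ p : K[X],
      D ((e : Unitization K A) * aeval (b : Unitization K A) p)
        = (e : Unitization K A) * aeval (b : Unitization K A) (Δ p))
    (hΔ : ∀ (d : ℕ) (p : K[X]), p.natDegree = d →
      Δ^[d] p = C ((Nat.factorial d : K) * p.leadingCoeff)) :
    e = 0 := by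
  set a : ℕ → A := fun n => (fun x : A => x * b)^[n] b with ha
  set E : Unitization K A := (e : Unitization K A)
  set B : Unitization K A := (b : Unitization K A)
  have hEB : E * B = B := by rw [← Unitization.inr_mul, heb]
  have hEBpow : ∀ n : ℕ, E * B ^ (n+1) = B ^ (n+1) := by
    intro n
    rw [pow_succ', ← mul_assoc, hEB]
  have haB : ∀ n : ℕ, (a n : Unitization K A) = B ^ (n+1) := by
    intro n
    induction n with
    | zero => simp [ha]; rfl
    | succ n ih =>
      have : a (n+1) = a n * b := Function.iterate_succ_apply' _ _ _
      rw [this, Unitization.inr_mul, ih]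
      show B ^ (n+1) * B = B ^ (n+1+1)
      rw [← pow_succ]
  -- find a linear dependence among the powers of b
  set V := Submodule.span K (Set.range fun n : ℕ => a n) with hV
  set m : ℕ := Module.finrank K V + 1 with hm
  have hmem : ∀ i : ℕ, a i ∈ V := fun i => Submodule.subset_span ⟨i, rfl⟩
  have hdep : ¬ LinearIndependent K (fun i : Fin m => (⟨a i, hmem i⟩ : V)) := by
    intro h
    have := h.fintype_card_le_finrank
    simp [hm] at this
  obtain ⟨g, hgsum, i₀, hgi₀⟩ := Fintype.not_linearIndependent_iff.mp hdep
  have hgA : (∑ i : Fin m, g i • a i) = 0 := by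
    have := congrArg (V.subtype) hgsum
    simpa using this
  -- the dependence polynomial
  set p : K[X] := ∑ i : Fin m, C (g i) * X ^ ((i : ℕ) + 1) with hp
  have hθp : E * aeval B p = 0 := by
    rw [hp, map_sum, Finset.mul_sum]
    have : ∀ i : Fin m, E * aeval B (C (g i) * X ^ ((i : ℕ) + 1)) = g i • (a i : Unitization K A) := by
      intro i
      rw [map_mul, aeval_C, aeval_X_pow, haB i, Algebra.algebraMap_eq_smul_one]
      rw [smul_mul_assoc, one_mul, mul_smul_comm, hEBpow]
    rw [Finset.sum_congr rfl (fun i _ => this i)]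
    have key : ∀ s : Finset (Fin m),
        ((∑ i ∈ s, g i • a i : A) : Unitization K A)
          = ∑ i ∈ s, g i • ((a i : A) : Unitization K A) := by
      intro s
      induction s using Finset.induction with
      | empty => simp
      | insert _ _ h ih =>
        rw [Finset.sum_insert h, Finset.sum_insert h, Unitization.inr_add,
          Unitization.inr_smul, ih]
    rw [← key, hgA, Unitization.inr_zero]
  -- `p` is nonzero with zero constant term
  have hcoeff : p.coeff ((i₀ : ℕ) + 1) = g i₀ := by
    rw [hp, finset_sum_coeff]
    have h1 : ∀ i : Fin m,
        (C (g i) * X ^ ((i : ℕ) + 1)).coeff ((i₀ : ℕ) + 1) = if i = i₀ then g i else 0 := by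
      intro i
      rw [coeff_C_mul, coeff_X_pow]
      by_cases h : i = i₀
      · simp [h]
      · have hne : ¬ ((i₀ : ℕ) + 1 = (i : ℕ) + 1) := fun hc => h (Fin.ext (by omega))
        simp [h, hne]
        intro hc; exact absurd (Fin.ext hc.symm) h
    rw [Finset.sum_congr rfl (fun i _ => h1 i), Finset.sum_ite_eq' Finset.univ i₀ g]
    simp
  have hp0 : p ≠ 0 := fun h0 => hgi₀ (by rw [← hcoeff, h0, coeff_zero])
  have hc0 : p.coeff 0 = 0 := by
    rw [hp, finset_sum_coeff]
    apply Finset.sum_eq_zero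
    intro i _
    rw [coeff_C_mul, coeff_X_pow]
    simp
  have hd1 : 1 ≤ p.natDegree := by
    by_contra h
    push_neg at h
    have h2 : p = C (p.coeff 0) := p.eq_C_of_natDegree_eq_zero (by omega)
    rw [hc0] at h2
    simp only [map_zero] at h2
    exact hp0 h2
  -- iterate D
  have hiter : ∀ (k : ℕ) (q : K[X]),
      D^[k] (E * aeval B q) = E * aeval B (Δ^[k] q) := by
    intro k
    induction k with
    | zero => simp
    | succ k ih =>
      intro q
      rw [Function.iterate_succ_apply, hDθ, ih, Function.iterate_succ_apply]
  have h0iter : ∀ k : ℕ, D^[k] (0 : Unitization K A) = 0 := by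
    intro k
    induction k with
    | zero => simp
    | succ k ih => rw [Function.iterate_succ_apply, hD0, ih]
  set d := p.natDegree with hdd
  have hfin : E * aeval B (Δ^[d] p) = 0 := by
    rw [← hiter, hθp, h0iter]
  rw [hΔ d p rfl] at hfin
  set c : K := (Nat.factorial d : K) * p.leadingCoeff with hcc
  have hcne : c ≠ 0 :=
    mul_ne_zero (Nat.cast_ne_zero.2 (Nat.factorial_ne_zero d)) (leadingCoeff_ne_zero.2 hp0)
  rw [aeval_C, Algebra.algebraMap_eq_smul_one, mul_smul_comm, mul_one] at hfin
  have hE0 : E = 0 := by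
    have h2 := congrArg (fun z => c⁻¹ • z) hfin
    simpa [smul_smul, inv_mul_cancel₀ hcne] using h2
  have : ((e : A) : Unitization K A) = ((0 : A) : Unitization K A) := by
    rw [Unitization.inr_zero]; exact hE0
  exact Unitization.inr_injective this

variable (δ : A →ₗ[K] A)

/-- The canonical extension of `δ` to the unitization, vanishing on constants. -/
private noncomputable def Dl : Unitization K A →ₗ[K] Unitization K A where
  toFun u := ((δ (Unitization.sndHom K K A u) : A) : Unitization K A)
  map_add' u v := by simp [Unitization.inr_add]
  map_smul' c u := by simp [Unitization.inr_smul]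

private lemma Dl_inr (a : A) : Dl δ ((a : A) : Unitization K A) = ((δ a : A) : Unitization K A) := by
  simp [Dl]

private lemma Dl_one : Dl δ (1 : Unitization K A) = 0 := by
  simp [Dl]

private lemma Dl_mul (hLeib : ∀ a b : A, δ (a * b) = δ a * b + a * δ b)
    (u v : Unitization K A) : Dl δ (u * v) = Dl δ u * v + u * Dl δ v := by
  refine Unitization.ext ?_ ?_
  · simp [Dl]
  · simp only [Dl, LinearMap.coe_mk, AddHom.coe_mk, Unitization.snd_add, Unitization.snd_mul,
      Unitization.snd_inr, Unitization.fst_inr, Unitization.sndHom_apply, zero_smul,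
      map_add, map_smul, hLeib, zero_add, add_zero]
    abel

private lemma deriv_branch (hLeib : ∀ a b : A, δ (a * b) = δ a * b + a * δ b)
    (e b : A) (hidem : e * e = e) (hker : δ e = 0) (hδb : δ b = e)
    (heb : e * b = b) (hbe : b * e = b) (p : K[X]) :
    Dl δ ((e : Unitization K A) * aeval (b : Unitization K A) p)
      = (e : Unitization K A) * aeval (b : Unitization K A) (derivative p) := by
  set E : Unitization K A := (e : Unitization K A)
  set B : Unitization K A := (b : Unitization K A)
  have hEB : E * B = B := by rw [← Unitization.inr_mul, heb]
  have hBE : B * E = B := by rw [← Unitization.inr_mul, hbe]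
  have hDE : Dl δ E = 0 := by rw [Dl_inr, hker, Unitization.inr_zero]
  have hDB : Dl δ B = E := by rw [Dl_inr, hδb]
  have hEBpow : ∀ n : ℕ, E * B ^ (n + 1) = B ^ (n + 1) := by
    intro n; rw [pow_succ', ← mul_assoc, hEB]
  have hpow : ∀ n : ℕ, Dl δ (B ^ (n + 1)) = (n + 1) • (E * B ^ n) := by
    intro n
    induction n with
    | zero => simp [hDB]
    | succ n ih =>
      rw [pow_succ', Dl_mul δ hLeib, hDB, ih, mul_smul_comm]
      have h1 : B * (E * B ^ n) = B * B ^ n := by rw [← mul_assoc, hBE]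
      rw [hEBpow n, h1, ← pow_succ', succ_nsmul]
      simp [add_smul]
      abel
  induction p using Polynomial.induction_on' with
  | add p q hp hq =>
    simp only [map_add, mul_add]
    rw [hp, hq]
  | monomial n c =>
    rw [aeval_monomial, Algebra.algebraMap_eq_smul_one, smul_mul_assoc, one_mul,
      mul_smul_comm, map_smul]
    cases n with
    | zero =>
      simp only [pow_zero, mul_one, hDE, smul_zero, derivative_monomial]
      simp
    | succ n =>
      rw [hEBpow, hpow, derivative_monomial, aeval_monomial, Algebra.algebraMap_eq_smul_one,
        smul_mul_assoc, one_mul, mul_smul_comm]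
      rw [show n + 1 - 1 = n from rfl, ← Nat.cast_smul_eq_nsmul K ((n+1)) (E * B ^ n), smul_smul]


private noncomputable def Phi (φ : A →ₙₐ[K] A) : Unitization K A →ₐ[K] Unitization K A :=
  ((Unitization.inrNonUnitalAlgHom K A).comp φ).toAlgHom

private lemma Phi_inr (φ : A →ₙₐ[K] A) (a : A) :
    Phi φ ((a : A) : Unitization K A) = ((φ a : A) : Unitization K A) := by
  simp [Phi]

private lemma ederiv_branch (φ : A →ₙₐ[K] A) (e b : A) (hidem : e * e = e)
    (hφe : φ e = e) (hφb : φ b = b - e) (heb : e * b = b) (hbe : b * e = b) (p : K[X]) :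
    ((e : Unitization K A) * aeval (b : Unitization K A) p)
      - Phi φ ((e : Unitization K A) * aeval (b : Unitization K A) p)
      = (e : Unitization K A) * aeval (b : Unitization K A) (Dd p) := by
  set E : Unitization K A := (e : Unitization K A)
  set B : Unitization K A := (b : Unitization K A)
  have hEB : E * B = B := by rw [← Unitization.inr_mul, heb]
  have hBE : B * E = B := by rw [← Unitization.inr_mul, hbe]
  have hEE : E * E = E := by rw [← Unitization.inr_mul, hidem]
  have hPE : Phi φ E = E := by rw [Phi_inr, hφe]
  have hPB : Phi φ B = B - E := by rw [Phi_inr, hφb, Unitization.inr_sub]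
  have hEpow : ∀ n : ℕ, E ^ (n + 1) = E := by
    intro n
    induction n with
    | zero => rw [pow_one]
    | succ n ih => rw [pow_succ, ih, hEE]
  have hcommB : Commute E B := by rw [Commute, SemiconjBy, hEB, hBE]
  have hkey : ∀ q : K[X], E * aeval (B - E) q = E * aeval (B - 1) q := by
    intro q
    induction q using Polynomial.induction_on' with
    | add q r hq hr => rw [map_add, map_add, mul_add, mul_add, hq, hr]
    | monomial n c =>
      rw [aeval_monomial, aeval_monomial, Algebra.algebraMap_eq_smul_one, smul_mul_assoc,
        one_mul, smul_mul_assoc, one_mul, mul_smul_comm, mul_smul_comm]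
      congr 1
      cases n with
      | zero => rw [pow_zero, pow_zero]
      | succ n =>
        have c1 : Commute E (B - E) := hcommB.sub_right (Commute.refl E)
        have c2 : Commute E (B - 1) := hcommB.sub_right (Commute.one_right E)
        have h1 : E * (B - E) = B - E := by rw [mul_sub, hEB, hEE]
        have h2 : E * (B - 1) = B - E := by rw [mul_sub, hEB, mul_one]
        calc E * (B - E) ^ (n + 1) = E ^ (n + 1) * (B - E) ^ (n + 1) := by rw [hEpow]
          _ = (E * (B - E)) ^ (n + 1) := (c1.mul_pow (n + 1)).symm
          _ = (E * (B - 1)) ^ (n + 1) := by rw [h1, h2]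
          _ = E ^ (n + 1) * (B - 1) ^ (n + 1) := c2.mul_pow (n + 1)
          _ = E * (B - 1) ^ (n + 1) := by rw [hEpow]
  calc E * aeval B p - Phi φ (E * aeval B p)
      = E * aeval B p - E * aeval (B - E) p := by
        rw [map_mul, hPE, ← aeval_algHom_apply, hPB]
    _ = E * aeval B p - E * aeval B (p.comp (X - C 1)) := by
        rw [hkey, aeval_comp]
        congr 2
        rw [map_sub, aeval_X, aeval_C, map_one]
    _ = E * aeval B (Dd p) := by
        unfold Dd
        rw [map_sub, mul_sub]

end MainAux


/-- Let `K` be a field of characteristic zero and `A` a `K`-algebra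
that is algebraic over `K` (each `a ∈ A` spans, together with its powers
`a, a², a³, …`, a finite-dimensional `K`-subspace; powers are encoded via iterated
right multiplication since `A` need not be unital).  If `δ` is a locally nilpotent
`K`-derivation or a locally nilpotent `K`-`E`-derivation of `A`, then the only
idempotent of `A` lying in both the kernel and the image of `δ` is `0`. -/
theorem no_nonzero_idempotent_in_kernel_cap_image_of_algebraic
    {K : Type*} [Field K] [CharZero K]
    {A : Type*} [NonUnitalRing A] [Module K A] [SMulCommClass K A A] [IsScalarTower K A A]
    (halg : ∀ a : A,
      FiniteDimensional K (Submodule.span K (Set.range fun n : ℕ => (fun x : A => x * a)^[n] a)))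
    (δ : A →ₗ[K] A)
    (hδ : (∀ a b : A, δ (a * b) = δ a * b + a * δ b) ∨
      (∃ φ : A →ₙₐ[K] A, ∀ a : A, δ a = a - φ a))
    (hLN : ∀ a : A, ∃ m : ℕ, 1 ≤ m ∧ (δ ^ m) a = 0)
    (e : A) (hidem : e * e = e) (hker : δ e = 0) (him : e ∈ LinearMap.range δ) :
    e = 0 := by
  obtain ⟨x, hx⟩ := him
  set b : A := e * x * e with hb
  have heb : e * b = b := by
    rw [hb, ← mul_assoc, ← mul_assoc, hidem]
  have hbe : b * e = b := by
    rw [hb, mul_assoc, hidem]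
  rcases hδ with hLeib | ⟨φ, hφ⟩
  · -- derivation case
    have hδex : δ (e * x) = e := by
      rw [hLeib, hker, hx, zero_mul, zero_add, hidem]
    have hδb : δ b = e := by
      rw [hb, hLeib, hδex, hker, mul_zero, add_zero, hidem]
    exact main_aux e b (halg b) heb (Dl δ) (by simp) (fun q : Polynomial K => Polynomial.derivative q)
      (deriv_branch δ hLeib e b hidem hker hδb heb hbe) deriv_iter
  · -- E-derivation case
    have hφe : φ e = e := by
      have h1 := hφ e
      rw [hker] at h1
      exact (sub_eq_zero.mp h1.symm).symm
    have hφx : φ x = x - e := by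
      have h1 := hφ x
      rw [hx] at h1
      rw [eq_sub_iff_add_eq, h1]
      abel
    have hφb : φ b = b - e := by
      rw [hb, map_mul, map_mul, hφe, hφx]
      rw [mul_sub, sub_mul, mul_assoc e e e, hidem, hidem]
    have hδb : δ b = e := by
      rw [hφ b, hφb]
      abel
    exact main_aux e b (halg b) heb (fun u => u - Phi φ u) (by simp) Dd
      (ederiv_branch φ e b hidem hφe hφb heb hbe) Dd_iter
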